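/- Let κ > 0 and p ∈ (0,1]. Let C₀, C₁, C₂, … be i.i.d. Bernoulli random variables with success probability p, and independently let (E_k)_{k≥1} be i.i.d. exponential random variables with rate κ, with T_k = E_1 + ⋯ + E_k. Define δ = 0 if C₀ = 1, and otherwise δ = T_K where K = min{k ≥ 1 : C_k = 1}. Then E[e^{−δ/4}] = (1 + 4κ)·p / (1 + 4κp), and in particular E[e^{−δ/4}] ≤ (1 + 4κ)·p. -/

import Mathlib

open MeasureTheory ProbabilityTheory Finset

lemma lap (κ : ℝ) (hκ : 0 < κ) :
    ∫⁻ x, ENNReal.ofReal (Real.exp (-x/4)) ∂(expMeasure κ)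
      = ENNReal.ofReal (κ/(κ+4⁻¹)) := by
  have hκ4 : (0:ℝ) < κ + 4⁻¹ := by linarith
  have hmeas : Measurable fun x : ℝ => ENNReal.ofReal (Real.exp (-x/4)) := by fun_prop
  have hpdf : Measurable (exponentialPDF κ) := by
    unfold exponentialPDF
    exact ENNReal.measurable_ofReal.comp (measurable_exponentialPDFReal κ)
  have h1 : expMeasure κ = MeasureTheory.volume.withDensity (exponentialPDF κ) := rfl
  rw [h1, lintegral_withDensity_eq_lintegral_mul _ hpdf hmeas]
  have key : ∀ x : ℝ, (exponentialPDF κ * fun x => ENNReal.ofReal (Real.exp (-x/4))) x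
      = ENNReal.ofReal (κ/(κ+4⁻¹)) * exponentialPDF (κ+4⁻¹) x := by
    intro x
    simp only [Pi.mul_apply]
    rcases le_or_gt 0 x with hx | hx
    · rw [exponentialPDF_of_nonneg hx, exponentialPDF_of_nonneg hx,
        ← ENNReal.ofReal_mul (by positivity), ← ENNReal.ofReal_mul (by positivity)]
      congr 1
      have h2 : Real.exp (-(κ*x)) * Real.exp (-x/4) = Real.exp (-((κ+4⁻¹)*x)) := by
        rw [← Real.exp_add]; ring_nf
      have h3 : κ/(κ+4⁻¹) * (κ+4⁻¹) = κ := div_mul_cancel₀ _ (ne_of_gt hκ4)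
      calc κ * Real.exp (-(κ*x)) * Real.exp (-x/4)
          = κ * Real.exp (-((κ+4⁻¹)*x)) := by rw [mul_assoc, h2]
        _ = κ/(κ+4⁻¹) * ((κ+4⁻¹) * Real.exp (-((κ+4⁻¹)*x))) := by rw [← mul_assoc, h3]
    · rw [exponentialPDF_of_neg hx, exponentialPDF_of_neg hx, zero_mul, mul_zero]
  rw [lintegral_congr key, lintegral_const_mul _ (by
    unfold exponentialPDF
    exact ENNReal.measurable_ofReal.comp (measurable_exponentialPDFReal _)),
    lintegral_exponentialPDF_eq_one hκ4, mul_one]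

/-- Model for the first time `δ` a dynamical edge is present: the edge is initially present
with probability `p` (event `C₀ = 1`), updates at the points `T_k = E_1 + ⋯ + E_k` of a
Poisson process of intensity `κ`, and after each update is present independently with
probability `p`; `δ = 0` if `C₀ = 1` and otherwise `δ = T_K` with
`K = min {k ≥ 1 : C_k = 1}`. Then `E[e^{-δ/4}] = (1+4κ)p/(1+4κp) ≤ (1+4κ)p`. -/
theorem stmt7 {Ω : Type*} [MeasurableSpace Ω] (μ : Measure Ω) [IsProbabilityMeasure μ]
    (κ p : ℝ) (hκ : 0 < κ) (hp0 : 0 < p) (hp1 : p ≤ 1)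
    (C : ℕ → Ω → ℝ) (E : ℕ → Ω → ℝ)
    (hmeasC : ∀ i, Measurable (C i)) (hmeasE : ∀ i, Measurable (E i))
    (hindep : iIndepFun (Sum.elim C E) μ)
    (hC1 : ∀ i, μ {ω | C i ω = 1} = ENNReal.ofReal p)
    (hC0 : ∀ i, μ {ω | C i ω = 0} = ENNReal.ofReal (1 - p))
    (hE : ∀ i, μ.map (E i) = expMeasure κ)
    (δ : Ω → ℝ)
    (hδ : ∀ ω, δ ω = if C 0 ω = 1 then 0
        else ∑ i ∈ Finset.range (sInf {k : ℕ | 1 ≤ k ∧ C k ω = 1}), E i ω) :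
    (∫⁻ ω, ENNReal.ofReal (Real.exp (-δ ω / 4)) ∂μ)
        = ENNReal.ofReal ((1 + 4 * κ) * p / (1 + 4 * κ * p))
    ∧ (∫⁻ ω, ENNReal.ofReal (Real.exp (-δ ω / 4)) ∂μ)
        ≤ ENNReal.ofReal ((1 + 4 * κ) * p) := by
  rename_i mΩ instP
  have key : (∫⁻ ω, ENNReal.ofReal (Real.exp (-δ ω / 4)) ∂μ)
      = ENNReal.ofReal ((1 + 4 * κ) * p / (1 + 4 * κ * p)) := by
    -- basic measurable-space setup
    set m : ℕ ⊕ ℕ → MeasurableSpace Ω :=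
      fun i => MeasurableSpace.comap (Sum.elim C E i) inferInstance with hm
    have hmeasSE : ∀ i, Measurable (Sum.elim C E i) := by
      rintro (j | j); exacts [hmeasC j, hmeasE j]
    have hmle : ∀ i, m i ≤ mΩ := fun i => (hmeasSE i).comap_le
    set MC : MeasurableSpace Ω := ⨆ j : ℕ, m (Sum.inl j) with hMC
    set ME : MeasurableSpace Ω := ⨆ j : ℕ, m (Sum.inr j) with hME
    have hMCle : MC ≤ mΩ := iSup_le fun j => hmle _
    have hMEle : ME ≤ mΩ := iSup_le fun j => hmle _
    have hIndepCE : Indep MC ME μ := by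
      have := indep_iSup_of_disjoint hmle hindep.iIndep
        (S := Set.range Sum.inl) (T := Set.range Sum.inr)
        (Set.isCompl_range_inl_range_inr.disjoint)
      rwa [iSup_range, iSup_range] at this
    -- events
    set s : ℕ → Set Ω :=
      fun k => (⋂ j ∈ Finset.range k, {ω | C j ω = 0}) ∩ {ω | C k ω = 1} with hs
    have hCset : ∀ (j : ℕ) (v : ℝ), MeasurableSet[m (Sum.inl j)] {ω | C j ω = v} := by
      intro j v
      exact ⟨{v}, measurableSet_singleton v, rfl⟩
    have hCsetMC : ∀ (j : ℕ) (v : ℝ), MeasurableSet[MC] {ω | C j ω = v} := by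
      intro j v
      exact (le_iSup (fun j => m (Sum.inl j)) j : _ ≤ MC) _ (hCset j v)
    have hsMC : ∀ k, MeasurableSet[MC] (s k) := by
      intro k
      exact MeasurableSet.inter
        (MeasurableSet.biInter (Finset.range k).countable_toSet fun j _ => hCsetMC j 0)
        (hCsetMC k 1)
    have hsmeas : ∀ k, MeasurableSet[mΩ] (s k) := fun k => hMCle _ (hsMC k)
    have hEME : ∀ i : ℕ, Measurable[ME] (E i) := by
      intro i
      exact (Measurable.of_comap_le le_rfl).mono (le_iSup (fun j => m (Sum.inr j)) i) le_rfl
    -- pairwise disjoint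
    have hdisj : Pairwise (Function.onFun Disjoint s) := by
      have key : ∀ k l, k < l → Disjoint (s k) (s l) := by
        intro k l hkl
        rw [Set.disjoint_left]
        rintro ω ⟨-, h1⟩ ⟨h0, -⟩
        have hk0 : C k ω = 0 :=
          Set.mem_iInter₂.mp h0 k (Finset.mem_range.mpr hkl)
        rw [Set.mem_setOf_eq] at h1
        norm_num [hk0] at h1
      intro k l hkl
      rcases lt_or_gt_of_ne hkl with h | h
      exacts [key k l h, (key l k h).symm]
    -- measure of s k
    have hμs : ∀ k, μ (s k) = ENNReal.ofReal (1-p) ^ k * ENNReal.ofReal p := by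
      intro k
      classical
      set g : ℕ ⊕ ℕ → Set Ω := Sum.elim
        (fun j => if j = k then {ω | C j ω = 1} else {ω | C j ω = 0})
        (fun _ => Set.univ) with hg
      have h1 : μ (⋂ i ∈ (Finset.range (k+1)).image Sum.inl, g i)
          = ∏ i ∈ (Finset.range (k+1)).image Sum.inl, μ (g i) := by
        refine hindep.meas_biInter ?_
        intro i hi
        simp only [Finset.mem_image, Finset.mem_range] at hi
        obtain ⟨j, hj, rfl⟩ := hi
        by_cases hjk : j = k
        · convert hCset j 1 using 1; simp [hg, hjk]
        · simpa [hg, hjk] using hCset j 0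
      have h2 : (⋂ i ∈ (Finset.range (k+1)).image Sum.inl, g i) = s k := by
        rw [Finset.set_biInter_finset_image]
        ext ω
        simp only [Set.mem_iInter, Finset.mem_range, hg, Sum.elim_inl, hs, Set.mem_inter_iff,
          Set.mem_setOf_eq]
        constructor
        · intro h
          refine ⟨fun j hj => ?_, ?_⟩
          · have := h j (by omega)
            rwa [if_neg (by omega), Set.mem_setOf_eq] at this
          · have := h k (by omega)
            rwa [if_pos rfl, Set.mem_setOf_eq] at this
        · rintro ⟨h0, h1'⟩ j hj
          by_cases hjk : j = k
          · subst hjk; rw [if_pos rfl]; exact h1'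
          · rw [if_neg hjk, Set.mem_setOf_eq]
            exact h0 j (by omega)
      have h3 : ∏ i ∈ (Finset.range (k+1)).image Sum.inl, μ (g i)
          = ∏ j ∈ Finset.range (k+1), μ (g (Sum.inl j)) :=
        Finset.prod_image fun _ _ _ _ h => Sum.inl.inj h
      rw [← h2, h1, h3, Finset.prod_range_succ]
      have h4 : ∀ j ∈ Finset.range k, μ (g (Sum.inl j)) = ENNReal.ofReal (1-p) := by
        intro j hj
        simp only [Finset.mem_range] at hj
        simp only [hg, Sum.elim_inl, if_neg (Nat.ne_of_lt hj)]
        exact hC0 j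
      rw [Finset.prod_congr rfl h4, Finset.prod_const, Finset.card_range]
      simp [hg, hC1 k]
    -- Laplace factor per E i
    set r : ℝ := κ/(κ+4⁻¹) with hr
    have hκ4 : (0:ℝ) < κ + 4⁻¹ := by linarith
    have hr0 : 0 ≤ r := by positivity
    have hhmeas : Measurable fun x : ℝ => ENNReal.ofReal (Real.exp (-x/4)) := by fun_prop
    have hfac : ∀ i, ∫⁻ ω, ENNReal.ofReal (Real.exp (-(E i ω)/4)) ∂μ = ENNReal.ofReal r := by
      intro i
      rw [← @lintegral_map Ω ℝ mΩ _ μ _ _ hhmeas (hmeasE i), hE i, lap κ hκ]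
    -- product over range k
    have hL : ∀ k, ∫⁻ ω, ENNReal.ofReal (Real.exp (-(∑ i ∈ Finset.range k, E i ω)/4)) ∂μ
        = ENNReal.ofReal r ^ k := by
      intro k
      induction k with
      | zero => simp
      | succ k ih =>
        have hsplit : ∀ ω, ENNReal.ofReal (Real.exp (-(∑ i ∈ Finset.range (k+1), E i ω)/4))
            = ENNReal.ofReal (Real.exp (-(∑ i ∈ Finset.range k, E i ω)/4))
              * ENNReal.ofReal (Real.exp (-(E k ω)/4)) := by
          intro ω
          rw [← ENNReal.ofReal_mul (Real.exp_nonneg _), ← Real.exp_add, Finset.sum_range_succ]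
          congr 1
          ring
        have hind : Indep (⨆ j ∈ Set.Iio k, m (Sum.inr j)) (m (Sum.inr k)) μ := by
          have hd : Disjoint (Sum.inr '' Set.Iio k : Set (ℕ ⊕ ℕ)) {Sum.inr k} := by
            rw [Set.disjoint_singleton_right]
            rintro ⟨j, hj, hjk⟩
            exact absurd (Sum.inr.inj hjk) (Nat.ne_of_lt hj)
          have := indep_iSup_of_disjoint hmle hindep.iIndep
            (S := Sum.inr '' Set.Iio k) (T := {Sum.inr k}) hd
          rwa [iSup_image, _root_.iSup_singleton] at this
        have hmf : Measurable[⨆ j ∈ Set.Iio k, m (Sum.inr j)]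
            fun ω => ENNReal.ofReal (Real.exp (-(∑ i ∈ Finset.range k, E i ω)/4)) := by
          refine hhmeas.comp (Finset.measurable_sum _ fun i hi => ?_)
          exact (Measurable.of_comap_le le_rfl).mono
            (le_biSup (fun j => m (Sum.inr j)) (Finset.mem_range.mp hi)) le_rfl
        have hmg : Measurable[m (Sum.inr k)]
            fun ω => ENNReal.ofReal (Real.exp (-(E k ω)/4)) :=
          hhmeas.comp (Measurable.of_comap_le le_rfl)
        calc ∫⁻ ω, ENNReal.ofReal (Real.exp (-(∑ i ∈ Finset.range (k+1), E i ω)/4)) ∂μ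
            = ∫⁻ ω, (fun ω => ENNReal.ofReal (Real.exp (-(∑ i ∈ Finset.range k, E i ω)/4))) ω
                * (fun ω => ENNReal.ofReal (Real.exp (-(E k ω)/4))) ω ∂μ := by
              exact lintegral_congr hsplit
          _ = (∫⁻ ω, ENNReal.ofReal (Real.exp (-(∑ i ∈ Finset.range k, E i ω)/4)) ∂μ)
                * ∫⁻ ω, ENNReal.ofReal (Real.exp (-(E k ω)/4)) ∂μ :=
              lintegral_mul_eq_lintegral_mul_lintegral_of_independent_measurableSpace
                (iSup_le fun j => iSup_le fun _ => hmle _) (hmle _) hind hmf hmg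
          _ = ENNReal.ofReal r ^ (k+1) := by rw [ih, hfac k, pow_succ]
    -- the union of the s k is co-null
    set B : Set Ω := ⋃ k, s k with hB
    have hBmeas : MeasurableSet[mΩ] B := MeasurableSet.iUnion hsmeas
    have hGnull : ∀ j : ℕ, μ ({ω | C j ω = 0} ∪ {ω | C j ω = 1})ᶜ = 0 := by
      intro j
      have hd : Disjoint {ω | C j ω = 0} {ω | C j ω = 1} := by
        rw [Set.disjoint_left]
        rintro ω h0 h1
        rw [Set.mem_setOf_eq] at h0 h1
        rw [h0] at h1; norm_num at h1
      have humeas : MeasurableSet[mΩ] ({ω | C j ω = 0} ∪ {ω | C j ω = 1}) :=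
        ((hmeasC j) (measurableSet_singleton 0)).union ((hmeasC j) (measurableSet_singleton 1))
      have hu : μ ({ω | C j ω = 0} ∪ {ω | C j ω = 1}) = 1 := by
        rw [measure_union hd ((hmeasC j) (measurableSet_singleton 1)), hC0 j, hC1 j,
          ← ENNReal.ofReal_add (by linarith) hp0.le]
        norm_num
      rw [measure_compl humeas (measure_ne_top μ _), hu, measure_univ, tsub_self]
    set G : Set Ω := ⋂ j : ℕ, ({ω | C j ω = 0} ∪ {ω | C j ω = 1}) with hG
    have hGcnull : μ Gᶜ = 0 := by
      rw [hG, Set.compl_iInter]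
      exact measure_iUnion_null fun j => hGnull j
    have hBG : ∀ n : ℕ, Bᶜ ∩ G ⊆ ⋂ j ∈ Finset.range n, {ω | C j ω = 0} := by
      rintro n ω ⟨hBc, hGω⟩
      have hall : ∀ j, C j ω = 0 := by
        intro j
        induction j using Nat.strong_induction_on with
        | _ j ih =>
          rcases Set.mem_iInter.mp hGω j with h0 | h1
          · exact h0
          · refine absurd (Set.mem_iUnion.mpr ⟨j, ?_⟩) hBc
            show ω ∈ (⋂ i ∈ Finset.range j, {ω | C i ω = 0}) ∩ {ω | C j ω = 1}
            exact Set.mem_inter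
              (Set.mem_iInter₂.mpr fun i hi => ih i (Finset.mem_range.mp hi)) h1
      exact Set.mem_iInter₂.mpr fun j _ => hall j
    have hμall0 : ∀ n, μ (⋂ j ∈ Finset.range n, {ω | C j ω = 0})
        = ENNReal.ofReal (1-p) ^ n := by
      intro n
      classical
      set g : ℕ ⊕ ℕ → Set Ω := Sum.elim (fun j => {ω | C j ω = 0}) (fun _ => Set.univ) with hg
      have h1 : μ (⋂ i ∈ (Finset.range n).image Sum.inl, g i)
          = ∏ i ∈ (Finset.range n).image Sum.inl, μ (g i) := by
        refine hindep.meas_biInter ?_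
        intro i hi
        simp only [Finset.mem_image, Finset.mem_range] at hi
        obtain ⟨j, hj, rfl⟩ := hi
        simpa [hg] using hCset j 0
      have h2 : (⋂ i ∈ (Finset.range n).image Sum.inl, g i)
          = ⋂ j ∈ Finset.range n, {ω | C j ω = 0} := by
        rw [Finset.set_biInter_finset_image]
        simp [hg]
      have h3 : ∏ i ∈ (Finset.range n).image Sum.inl, μ (g i)
          = ∏ j ∈ Finset.range n, μ (g (Sum.inl j)) :=
        Finset.prod_image fun _ _ _ _ h => Sum.inl.inj h
      rw [← h2, h1, h3]
      simp only [hg, Sum.elim_inl]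
      rw [Finset.prod_congr rfl (fun j _ => hC0 j), Finset.prod_const, Finset.card_range]
    have hBcnull : μ Bᶜ = 0 := by
      refine le_antisymm ?_ zero_le
      have h1 : μ (Bᶜ ∩ G) = 0 := by
        have hle : ∀ n, μ (Bᶜ ∩ G) ≤ ENNReal.ofReal (1-p) ^ n := fun n =>
          (measure_mono (hBG n)).trans (le_of_eq (hμall0 n))
        have hlim : Filter.Tendsto (fun n => ENNReal.ofReal (1-p) ^ n)
            Filter.atTop (nhds 0) :=
          ENNReal.tendsto_pow_atTop_nhds_zero_of_lt_one
            (ENNReal.ofReal_lt_one.mpr (by linarith))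
        exact le_antisymm (ge_of_tendsto' hlim hle) zero_le
      calc μ Bᶜ ≤ μ ((Bᶜ ∩ G) ∪ Gᶜ) := measure_mono (by
            intro ω h
            by_cases hg : ω ∈ G
            · exact Or.inl ⟨h, hg⟩
            · exact Or.inr hg)
        _ ≤ μ (Bᶜ ∩ G) + μ Gᶜ := measure_union_le _ _
        _ ≤ 0 := by rw [h1, hGcnull, add_zero]
    -- value of the integrand on s k
    have hval : ∀ k, ∀ ω ∈ s k, ENNReal.ofReal (Real.exp (-δ ω / 4))
        = ENNReal.ofReal (Real.exp (-(∑ i ∈ Finset.range k, E i ω)/4)) := by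
      rintro k ω ⟨h0, h1⟩
      rw [Set.mem_setOf_eq] at h1
      rcases Nat.eq_zero_or_pos k with rfl | hk
      · rw [hδ ω, if_pos h1]
        simp
      · have hC0ω : C 0 ω = 0 := Set.mem_iInter₂.mp h0 0 (Finset.mem_range.mpr hk)
        have hne : ¬ C 0 ω = 1 := by rw [hC0ω]; norm_num
        rw [hδ ω, if_neg hne]
        have hsInf : sInf {m : ℕ | 1 ≤ m ∧ C m ω = 1} = k := by
          refine le_antisymm (Nat.sInf_le ⟨hk, h1⟩) (le_csInf ⟨k, hk, h1⟩ ?_)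
          rintro mm ⟨hm1, hm2⟩
          by_contra hlt
          push_neg at hlt
          have : C mm ω = 0 := Set.mem_iInter₂.mp h0 mm (Finset.mem_range.mpr hlt)
          rw [this] at hm2; norm_num at hm2
        rw [hsInf]
    -- decompose the integral
    have hdec : ∫⁻ ω, ENNReal.ofReal (Real.exp (-δ ω / 4)) ∂μ
        = ∑' k, μ (s k) * ENNReal.ofReal r ^ k := by
      rw [← lintegral_add_compl (fun ω => ENNReal.ofReal (Real.exp (-δ ω / 4))) hBmeas,
        setLIntegral_measure_zero _ _ hBcnull, add_zero, hB, lintegral_iUnion hsmeas hdisj]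
      congr 1
      ext k
      have step1 : ∫⁻ ω in s k, ENNReal.ofReal (Real.exp (-δ ω / 4)) ∂μ
          = ∫⁻ ω in s k, ENNReal.ofReal (Real.exp (-(∑ i ∈ Finset.range k, E i ω)/4)) ∂μ :=
        setLIntegral_congr_fun (hsmeas k) (hval k)
      have hgmeasME : Measurable[ME]
          (fun ω => ENNReal.ofReal (Real.exp (-(∑ i ∈ Finset.range k, E i ω)/4))) :=
        hhmeas.comp (Finset.measurable_sum _ fun i _ => hEME i)
      have step2 : ∫⁻ ω in s k, ENNReal.ofReal (Real.exp (-(∑ i ∈ Finset.range k, E i ω)/4)) ∂μ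
          = ∫⁻ ω, (s k).indicator (fun _ => (1:ENNReal)) ω
              * (fun ω => ENNReal.ofReal (Real.exp (-(∑ i ∈ Finset.range k, E i ω)/4))) ω ∂μ := by
        rw [← lintegral_indicator (hsmeas k) _]
        refine lintegral_congr fun ω => ?_
        by_cases hω : ω ∈ s k <;> simp [Set.indicator_apply, hω]
      rw [step1, step2,
        lintegral_mul_eq_lintegral_mul_lintegral_of_independent_measurableSpace hMCle hMEle
          hIndepCE ((@measurable_const ENNReal Ω _ MC 1).indicator (hsMC k)) hgmeasME,
        lintegral_indicator (hsmeas k) _, setLIntegral_one, hL k]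
    -- sum the geometric series
    set t : ℝ := (1-p) * r with ht
    have ht0 : 0 ≤ t := mul_nonneg (by linarith) hr0
    have hrlt1 : r < 1 := by
      rw [hr, div_lt_one hκ4]; linarith
    have ht1 : t < 1 := lt_of_le_of_lt
      (by nlinarith : t ≤ r) hrlt1
    have h1t : (0:ℝ) < 1 - t := by linarith
    have hterm : ∀ k, μ (s k) * ENNReal.ofReal r ^ k
        = ENNReal.ofReal p * ENNReal.ofReal t ^ k := by
      intro k
      rw [hμs k, ht, ENNReal.ofReal_mul (by linarith), mul_pow]
      ring
    rw [hdec]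
    simp_rw [hterm]
    rw [ENNReal.tsum_mul_left, ENNReal.tsum_geometric]
    have hsub : (1 : ENNReal) - ENNReal.ofReal t = ENNReal.ofReal (1 - t) := by
      rw [ENNReal.ofReal_sub _ ht0, ENNReal.ofReal_one]
    have hfinal : ENNReal.ofReal p * (ENNReal.ofReal (1 - t))⁻¹
        = ENNReal.ofReal (p / (1 - t)) := by
      rw [ENNReal.ofReal_div_of_pos h1t, div_eq_mul_inv]
    rw [hsub, hfinal]
    congr 1
    have hd1 : (0:ℝ) < 1 + 4 * κ * p := by positivity
    have hd2 : κ + 4⁻¹ ≠ 0 := ne_of_gt hκ4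
    rw [div_eq_div_iff h1t.ne' hd1.ne', ht, hr]
    field_simp
    ring
  refine ⟨key, ?_⟩
  rw [key]
  exact ENNReal.ofReal_le_ofReal (div_le_self (by positivity) (by nlinarith))
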